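/- Let c = cos(π/8) and s = sin(π/8), and define the unit vectors u = (c, s), v = (−s, c), w = (c, −s), z = (s, c), e₀ = (1, 0), p = (1/√2, 1/√2), y₊ = (1/√2, i/√2), and y₋ = (1/√2, −i/√2) in ℂ². Then [ |⟨u, e₀⟩|² + |⟨u, p⟩|² + |⟨w, e₀⟩|² + |⟨z, p⟩|² + |⟨v, v⟩|² ] + |⟨y₊, y₊⟩|² − | |⟨y₊, e₀⟩|² − |⟨y₋, e₀⟩|² | − | |⟨y₊, p⟩|² − |⟨y₋, p⟩|² | = 4 + √2. In particular, this value of the imaginarity witness W_I exceeds the real bound 5, since 4 + √2 > 5. -/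

import Mathlib

open Complex Real

/-- The inner product `⟨ψ, φ⟩ = ∑ i, conj (ψ i) * φ i` on `ℂ^d`. -/
noncomputable def qinner {d : ℕ} (ψ φ : Fin d → ℂ) : ℂ :=
  ∑ i, (starRingEnd ℂ) (ψ i) * φ i

/-- Quantum value of the imaginarity witness: with `c = cos(π/8)`, `s = sin(π/8)`,
the unit vectors `u = (c,s)`, `v = (−s,c)`, `w = (c,−s)`, `z = (s,c)`, `e₀ = (1,0)`,
`p = (1/√2, 1/√2)`, `yPlus = (1/√2, i/√2)`, `yMinus = (1/√2, −i/√2)` give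
`W_I = [|⟨u,e₀⟩|² + |⟨u,p⟩|² + |⟨w,e₀⟩|² + |⟨z,p⟩|² + |⟨v,v⟩|²] + |⟨yPlus,yPlus⟩|²
  − ||⟨yPlus,e₀⟩|² − |⟨yMinus,e₀⟩|²| − ||⟨yPlus,p⟩|² − |⟨yMinus,p⟩|²| = 4 + √2 > 5`,
violating the real bound `β_I = 5`. -/
theorem stmt_12 :
    let c : ℝ := Real.cos (Real.pi / 8)
    let s : ℝ := Real.sin (Real.pi / 8)
    let u : Fin 2 → ℂ := ![(c : ℂ), (s : ℂ)]
    let v : Fin 2 → ℂ := ![(-s : ℂ), (c : ℂ)]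
    let w : Fin 2 → ℂ := ![(c : ℂ), (-s : ℂ)]
    let z : Fin 2 → ℂ := ![(s : ℂ), (c : ℂ)]
    let e₀ : Fin 2 → ℂ := ![1, 0]
    let p : Fin 2 → ℂ := ![(1 / Real.sqrt 2 : ℝ), (1 / Real.sqrt 2 : ℝ)]
    let yPlus : Fin 2 → ℂ := ![(1 / Real.sqrt 2 : ℝ), Complex.I / Real.sqrt 2]
    let yMinus : Fin 2 → ℂ := ![(1 / Real.sqrt 2 : ℝ), -Complex.I / Real.sqrt 2]
    ((‖qinner u e₀‖ ^ 2 + ‖qinner u p‖ ^ 2 + ‖qinner w e₀‖ ^ 2 +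
          ‖qinner z p‖ ^ 2 + ‖qinner v v‖ ^ 2) +
        ‖qinner yPlus yPlus‖ ^ 2 -
        |‖qinner yPlus e₀‖ ^ 2 - ‖qinner yMinus e₀‖ ^ 2| -
        |‖qinner yPlus p‖ ^ 2 - ‖qinner yMinus p‖ ^ 2| = 4 + Real.sqrt 2) ∧
      (4 : ℝ) + Real.sqrt 2 > 5 := by
  intro c s u v w z e₀ p yPlus yMinus
  have hr0 : Real.sqrt 2 ≠ 0 := by positivity
  have hrC : ((Real.sqrt 2 : ℝ) : ℂ) ≠ 0 := by exact_mod_cast hr0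
  have hr2 : (Real.sqrt 2) * (Real.sqrt 2) = 2 := Real.mul_self_sqrt (by norm_num)
  have hr2C : ((Real.sqrt 2 : ℝ) : ℂ) * ((Real.sqrt 2 : ℝ) : ℂ) = 2 := by exact_mod_cast hr2
  have hcs : s ^ 2 + c ^ 2 = 1 := Real.sin_sq_add_cos_sq _
  have h1 : qinner u e₀ = (c : ℂ) := by
    simp [qinner, Fin.sum_univ_two, u, e₀]
  have h2 : qinner u p = (((c + s) / Real.sqrt 2 : ℝ) : ℂ) := by
    simp only [qinner, Fin.sum_univ_two, u, p, Matrix.cons_val_zero, Matrix.cons_val_one,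
      Matrix.head_cons, Complex.conj_ofReal]
    push_cast
    field_simp <;> ring
  have h3 : qinner w e₀ = (c : ℂ) := by
    simp [qinner, Fin.sum_univ_two, w, e₀]
  have h4 : qinner z p = (((c + s) / Real.sqrt 2 : ℝ) : ℂ) := by
    simp only [qinner, Fin.sum_univ_two, z, p, Matrix.cons_val_zero, Matrix.cons_val_one,
      Matrix.head_cons, Complex.conj_ofReal]
    push_cast
    field_simp <;> ring
  have h5 : qinner v v = 1 := by
    simp only [qinner, Fin.sum_univ_two, v, Matrix.cons_val_zero, Matrix.cons_val_one,
      Matrix.head_cons, map_neg, Complex.conj_ofReal]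
    have : ((s : ℂ)) * s + c * c = ((s ^ 2 + c ^ 2 : ℝ) : ℂ) := by push_cast; ring
    rw [neg_mul_neg, this, hcs]
    norm_num
  have h6 : qinner yPlus yPlus = 1 := by
    simp only [qinner, Fin.sum_univ_two, yPlus, Matrix.cons_val_zero, Matrix.cons_val_one,
      Matrix.head_cons, Complex.conj_ofReal, map_div₀, Complex.conj_I]
    push_cast
    field_simp
    rw [sq ((Real.sqrt 2 : ℝ) : ℂ), hr2C, Complex.I_sq]
    ring_nf
  have h7 : qinner yPlus e₀ = ((1 / Real.sqrt 2 : ℝ) : ℂ) := by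
    simp [qinner, Fin.sum_univ_two, yPlus, e₀]
  have h8 : qinner yMinus e₀ = ((1 / Real.sqrt 2 : ℝ) : ℂ) := by
    simp [qinner, Fin.sum_univ_two, yMinus, e₀]
  have h9 : qinner yPlus p = (1/2 : ℂ) * (1 - Complex.I) := by
    simp only [qinner, Fin.sum_univ_two, yPlus, p, Matrix.cons_val_zero, Matrix.cons_val_one,
      Matrix.head_cons, Complex.conj_ofReal, map_div₀, Complex.conj_I]
    push_cast
    rw [div_mul_div_comm, div_mul_div_comm, hr2C]
    ring
  have h10 : qinner yMinus p = (1/2 : ℂ) * (1 + Complex.I) := by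
    simp only [qinner, Fin.sum_univ_two, yMinus, p, Matrix.cons_val_zero, Matrix.cons_val_one,
      Matrix.head_cons, Complex.conj_ofReal, map_div₀, Complex.conj_I, map_neg]
    push_cast
    rw [div_mul_div_comm, div_mul_div_comm, hr2C]
    ring
  have hnI : ‖(1 : ℂ) - Complex.I‖ ^ 2 = 2 := by
    rw [Complex.sq_norm, Complex.normSq_apply]
    norm_num
  have hnI' : ‖(1 : ℂ) + Complex.I‖ ^ 2 = 2 := by
    rw [Complex.sq_norm, Complex.normSq_apply]
    norm_num
  rw [h1, h2, h3, h4, h5, h6, h7, h8, h9, h10]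
  have hnr : ∀ x : ℝ, ‖((x : ℝ) : ℂ)‖ ^ 2 = x ^ 2 := fun x => by
    rw [Complex.norm_real, Real.norm_eq_abs, _root_.sq_abs]
  simp only [hnr, norm_one, one_pow]
  have h9' : ‖(1/2 : ℂ) * (1 - Complex.I)‖ ^ 2 = 1/2 := by
    rw [norm_mul, mul_pow, hnI]; norm_num
  have h10' : ‖(1/2 : ℂ) * (1 + Complex.I)‖ ^ 2 = 1/2 := by
    rw [norm_mul, mul_pow, hnI']; norm_num
  rw [h9', h10']
  have hgt : (4 : ℝ) + Real.sqrt 2 > 5 := by nlinarith [hr2, Real.sqrt_nonneg 2]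
  refine ⟨?_, hgt⟩
  have hsq : ((c + s) / Real.sqrt 2) ^ 2 = (c + s) ^ 2 / 2 := by
    rw [div_pow, Real.sq_sqrt (by norm_num : (0:ℝ) ≤ 2)]
  rw [hsq]
  have hcos : Real.cos (Real.pi / 4) = Real.sqrt 2 / 2 := Real.cos_pi_div_four
  have hsin : Real.sin (Real.pi / 4) = Real.sqrt 2 / 2 := Real.sin_pi_div_four
  have hc2 : 2 * c ^ 2 = 1 + Real.sqrt 2 / 2 := by
    have h := Real.cos_sq (Real.pi / 8)
    have h48 : 2 * (Real.pi / 8) = Real.pi / 4 := by ring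
    rw [h48, hcos] at h
    rw [show (c : ℝ) = Real.cos (Real.pi / 8) from rfl, h]
    ring
  have hscs : 2 * s * c = Real.sqrt 2 / 2 := by
    have h := Real.sin_two_mul (Real.pi / 8)
    have h48 : 2 * (Real.pi / 8) = Real.pi / 4 := by ring
    rw [h48, hsin] at h
    rw [show (s : ℝ) = Real.sin (Real.pi / 8) from rfl,
        show (c : ℝ) = Real.cos (Real.pi / 8) from rfl]
    linarith [h]
  rw [sub_self, abs_zero, sub_self, abs_zero]
  norm_num
  nlinarith [hcs, hc2, hscs]
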